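/- Fix p > 2. There exists a constant C > 0, depending only on p, such that for every integer k ≥ 1 and all independent, mean zero, real-valued random variables X̂_0,…,X̂_{k−1} on a probability space, each with E[|X̂_i|^p] < ∞, one has E[|Σ_{i=0}^{k−1} X̂_i|^p] ≤ C ( (Σ_{i=0}^{k−1} E[X̂_i^2])^{p/2} + Σ_{i=0}^{k−1} E[|X̂_i|^p] ). -/

import Mathlib

open MeasureTheory ProbabilityTheory

open Filter


/-- derivative of `|t|^q * t` for `q > 0`. -/
lemma hasDerivAt_abs_rpow_mul_self {q : ℝ} (hq : 0 < q) (t : ℝ) :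
    HasDerivAt (fun t : ℝ => |t| ^ q * t) ((q + 1) * |t| ^ q) t := by
  rcases lt_trichotomy t 0 with ht | rfl | ht
  · have h1 : HasDerivAt (fun s : ℝ => (-s) ^ q * s)
        ((q + 1) * (-t) ^ q) t := by
      have hneg : HasDerivAt (fun s : ℝ => -s) (-1) t := (hasDerivAt_id t).neg
      have h2 : HasDerivAt (fun s : ℝ => (-s) ^ q) (q * (-t) ^ (q - 1) * (-1)) t := by
        exact (Real.hasDerivAt_rpow_const (Or.inl (by linarith))).comp t hneg
      have h3 := h2.mul (hasDerivAt_id t)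
      refine h3.congr_deriv ?_
      have hnt : (0:ℝ) < -t := by linarith
      have : (-t) ^ (q - 1) * t = -(-t) ^ q := by
        rw [show q = (q - 1) + 1 by ring, Real.rpow_add_one (ne_of_gt hnt)]
        ring_nf
      have hmt : q * (-t) ^ (q - 1) * (-1) * id t + (-t) ^ q * 1
          = q * (-((-t) ^ (q - 1) * t)) + (-t) ^ q := by simp [id_eq]; ring
      rw [hmt, this]
      ring
    have : (fun s : ℝ => |s| ^ q * s) =ᶠ[nhds t] fun s : ℝ => (-s) ^ q * s := by
      filter_upwards [eventually_lt_nhds ht] with s hs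
      rw [abs_of_neg hs]
    rw [show |t| = -t from abs_of_neg ht]
    exact h1.congr_of_eventuallyEq this
  · have : HasDerivAt (fun t : ℝ => |t| ^ q * t) 0 0 := by
      rw [hasDerivAt_iff_tendsto_slope]
      have hcont : Tendsto (fun s : ℝ => |s| ^ q) (nhds 0) (nhds 0) := by
        have h0 : ContinuousAt (fun x : ℝ => x ^ q) |(0:ℝ)| := by
          simpa using Real.continuousAt_rpow_const 0 q (Or.inr hq.le)
        have := (h0.comp continuous_abs.continuousAt :
          ContinuousAt (fun s : ℝ => |s| ^ q) 0)
        have h : Tendsto (fun s : ℝ => |s| ^ q) (nhds 0) (nhds (|(0:ℝ)| ^ q)) := this.tendsto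
        simpa only [abs_zero, Real.zero_rpow (ne_of_gt hq)] using h
      have : (fun s : ℝ => slope (fun t : ℝ => |t| ^ q * t) 0 s) =ᶠ[nhdsWithin 0 {(0:ℝ)}ᶜ]
          fun s : ℝ => |s| ^ q := by
        filter_upwards [self_mem_nhdsWithin] with s hs
        have hs' : s ≠ 0 := hs
        simp [slope, hs', Real.zero_rpow (ne_of_gt hq)]
        field_simp
      rw [tendsto_congr' this]
      simpa using hcont.mono_left nhdsWithin_le_nhds
    simpa [Real.zero_rpow (ne_of_gt hq)] using this
  · have h1 : HasDerivAt (fun s : ℝ => s ^ q * s) ((q + 1) * t ^ q) t := by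
      have h2 : HasDerivAt (fun s : ℝ => s ^ q) (q * t ^ (q - 1)) t :=
        Real.hasDerivAt_rpow_const (Or.inl (ne_of_gt ht))
      have h3 := h2.mul (hasDerivAt_id t)
      refine h3.congr_deriv ?_
      rw [id_eq, show q = (q - 1) + 1 by ring, Real.rpow_add_one (ne_of_gt ht)]
      ring_nf
    have : (fun s : ℝ => |s| ^ q * s) =ᶠ[nhds t] fun s : ℝ => s ^ q * s := by
      filter_upwards [eventually_gt_nhds ht] with s hs
      rw [abs_of_pos hs]
    rw [show |t| = t from abs_of_pos ht]
    exact h1.congr_of_eventuallyEq this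


/-- Lipschitz-type bound for the derivative `t ↦ |t|^(q) * t`. -/
lemma abs_rpow_mul_self_sub_le {q : ℝ} (hq : 0 < q) (u v : ℝ) :
    |(|v| ^ q * v) - (|u| ^ q * u)| ≤ (q + 1) * (max |u| |v|) ^ q * |v - u| := by
  set s : Set ℝ := Metric.closedBall 0 (max |u| |v|)
  have hconv : Convex ℝ s := convex_closedBall _ _
  have hbound : ∀ x ∈ s, ‖(q + 1) * |x| ^ q‖ ≤ (q + 1) * (max |u| |v|) ^ q := by
    intro x hx
    have hx' : |x| ≤ max |u| |v| := by
      simpa [s, Real.dist_eq, abs_sub_comm] using Metric.mem_closedBall.mp hx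
    have h1 : |x| ^ q ≤ (max |u| |v|) ^ q :=
      Real.rpow_le_rpow (abs_nonneg x) hx' hq.le
    have h2 : (0:ℝ) ≤ (q+1) * |x| ^ q :=
      mul_nonneg (by linarith) (Real.rpow_nonneg (abs_nonneg x) q)
    rw [Real.norm_eq_abs, abs_of_nonneg h2]
    exact mul_le_mul_of_nonneg_left h1 (by linarith)
  have hderiv : ∀ x ∈ s, HasDerivWithinAt (fun t : ℝ => |t| ^ q * t)
      ((q + 1) * |x| ^ q) s x := fun x _ =>
    (hasDerivAt_abs_rpow_mul_self hq x).hasDerivWithinAt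
  have hu : u ∈ s := by
    simp [s, Real.dist_eq, abs_nonneg, le_max_left]
  have hv : v ∈ s := by
    simp [s, Real.dist_eq, abs_nonneg, le_max_right]
  have := hconv.norm_image_sub_le_of_norm_hasDerivWithin_le hderiv hbound hu hv
  simpa [Real.norm_eq_abs] using this


lemma add_rpow_le {a b q : ℝ} (ha : 0 ≤ a) (hb : 0 ≤ b) (hq : 0 ≤ q) :
    (a + b) ^ q ≤ 2 ^ q * (a ^ q + b ^ q) := by
  have h1 : a + b ≤ 2 * max a b := by
    rcases le_total a b with h | h
    · simp [max_eq_right h]; linarith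
    · simp [max_eq_left h]; linarith
  calc (a + b) ^ q ≤ (2 * max a b) ^ q :=
        Real.rpow_le_rpow (by linarith) h1 hq
    _ = 2 ^ q * (max a b) ^ q :=
        Real.mul_rpow (by norm_num) (le_max_iff.mpr (Or.inl ha))
    _ ≤ 2 ^ q * (a ^ q + b ^ q) := by
        apply mul_le_mul_of_nonneg_left _ (Real.rpow_nonneg (by norm_num) q)
        rcases le_total a b with h | h
        · rw [max_eq_right h]
          have : 0 ≤ a ^ q := Real.rpow_nonneg ha q
          linarith
        · rw [max_eq_left h]
          have : 0 ≤ b ^ q := Real.rpow_nonneg hb q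
          linarith

/-- Key pointwise inequality for Rosenthal's inequality. -/
lemma pointwise_rosenthal {p : ℝ} (hp : 2 < p) (x y : ℝ) :
    |x + y| ^ p ≤ |x| ^ p + (p * (|x| ^ (p - 2) * x)) * y
      + (p * (p - 1) * 2 ^ (p - 2)) * (|x| ^ (p - 2) * y ^ 2 + |y| ^ p) := by
  have hp1 : (1:ℝ) < p := by linarith
  have hq : (0:ℝ) < p - 2 := by linarith
  -- the function h(t) = |x+t|^p - |x|^p - p|x|^{p-2}x t
  set g : ℝ → ℝ := fun t => |x + t| ^ p - p * (|x| ^ (p - 2) * x) * t with hg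
  have hgderiv : ∀ t : ℝ, HasDerivAt g
      (p * (|x + t| ^ (p - 2) * (x + t)) - p * (|x| ^ (p - 2) * x)) t := by
    intro t
    have h1 : HasDerivAt (fun t : ℝ => x + t) 1 t := (hasDerivAt_id t).const_add x
    have h2 : HasDerivAt (fun t : ℝ => |x + t| ^ p)
        (p * |x + t| ^ (p - 2) * (x + t)) t := by
      simpa [Function.comp_def] using (hasDerivAt_abs_rpow (x + t) hp1).comp t h1
    have h3 : HasDerivAt (fun t : ℝ => p * (|x| ^ (p - 2) * x) * t)
        (p * (|x| ^ (p - 2) * x)) t := by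
      simpa using (hasDerivAt_id t).const_mul (p * (|x| ^ (p - 2) * x))
    have := h2.sub h3
    refine this.congr_deriv ?_
    ring
  -- bound on the derivative of g on the ball of radius |y|
  set s : Set ℝ := Metric.closedBall 0 |y| with hs
  have hC : ∀ t ∈ s, ‖p * (|x + t| ^ (p - 2) * (x + t)) - p * (|x| ^ (p - 2) * x)‖
      ≤ p * (p - 1) * (|x| + |y|) ^ (p - 2) * |y| := by
    intro t ht
    have ht' : |t| ≤ |y| := by
      simpa [hs, Real.dist_eq] using Metric.mem_closedBall.mp ht
    have key := abs_rpow_mul_self_sub_le (q := p - 2) hq x (x + t)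
    have hmax : max |x| |x + t| ≤ |x| + |y| := by
      apply max_le (le_add_of_nonneg_right (abs_nonneg y))
      calc |x + t| ≤ |x| + |t| := abs_add_le x t
        _ ≤ |x| + |y| := by linarith
    have h1 : (max |x| |x + t|) ^ (p - 2) ≤ (|x| + |y|) ^ (p - 2) :=
      Real.rpow_le_rpow (le_max_iff.mpr (Or.inl (abs_nonneg x))) hmax hq.le
    have h2 : |x + t - x| ≤ |y| := by simpa using ht'
    rw [Real.norm_eq_abs, ← mul_sub, abs_mul, abs_of_pos (by linarith : (0:ℝ) < p)]
    calc p * |(|x + t| ^ (p - 2) * (x + t)) - (|x| ^ (p - 2) * x)|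
        ≤ p * ((p - 2 + 1) * (max |x| |x + t|) ^ (p - 2) * |x + t - x|) :=
          mul_le_mul_of_nonneg_left key (by linarith)
      _ ≤ p * ((p - 1) * ((|x| + |y|) ^ (p - 2)) * |y|) := by
          apply mul_le_mul_of_nonneg_left _ (by linarith : (0:ℝ) ≤ p)
          have e1 : (0:ℝ) ≤ p - 2 + 1 := by linarith
          calc (p - 2 + 1) * (max |x| |x + t|) ^ (p - 2) * |x + t - x|
              ≤ (p - 2 + 1) * ((|x| + |y|) ^ (p - 2)) * |y| := by
                apply mul_le_mul (mul_le_mul_of_nonneg_left h1 e1) h2 (abs_nonneg _)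
                positivity
            _ = (p - 1) * ((|x| + |y|) ^ (p - 2)) * |y| := by ring_nf
      _ = p * (p - 1) * (|x| + |y|) ^ (p - 2) * |y| := by ring
  have hgs : ∀ t ∈ s, HasDerivWithinAt g
      (p * (|x + t| ^ (p - 2) * (x + t)) - p * (|x| ^ (p - 2) * x)) s t :=
    fun t _ => (hgderiv t).hasDerivWithinAt
  have h0 : (0:ℝ) ∈ s := by simp [hs]
  have hy : y ∈ s := by simp [hs, Real.dist_eq]
  have hmvt := (convex_closedBall (0:ℝ) |y|).norm_image_sub_le_of_norm_hasDerivWithin_le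
    hgs hC h0 hy
  -- hmvt : ‖g y - g 0‖ ≤ C * ‖y - 0‖
  have hg0 : g 0 = |x| ^ p := by simp [hg]
  have habs : |x + y| ^ p - |x| ^ p - p * (|x| ^ (p - 2) * x) * y
      ≤ p * (p - 1) * (|x| + |y|) ^ (p - 2) * |y| * |y| := by
    have h1 : g y - g 0 ≤ |g y - g 0| := le_abs_self _
    have h2 : |g y - g 0| ≤ p * (p - 1) * (|x| + |y|) ^ (p - 2) * |y| * |y| := by
      have := hmvt
      rw [Real.norm_eq_abs, Real.norm_eq_abs] at this
      simpa using this
    have := le_trans h1 h2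
    rw [hg0] at this
    simp only [hg] at this
    linarith
  -- now bound (|x|+|y|)^(p-2)
  have hsplit : (|x| + |y|) ^ (p - 2) ≤ 2 ^ (p - 2) * (|x| ^ (p - 2) + |y| ^ (p - 2)) :=
    add_rpow_le (abs_nonneg x) (abs_nonneg y) hq.le
  have hyy : |y| * |y| = y ^ 2 := by rw [← sq, sq_abs]
  have hfin : p * (p - 1) * (|x| + |y|) ^ (p - 2) * |y| * |y|
      ≤ (p * (p - 1) * 2 ^ (p - 2)) * (|x| ^ (p - 2) * y ^ 2 + |y| ^ p) := by
    have hnn : (0:ℝ) ≤ p * (p - 1) := by nlinarith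
    have h2 : p * (p - 1) * (|x| + |y|) ^ (p - 2) * |y| * |y|
        = p * (p - 1) * (|x| + |y|) ^ (p - 2) * y ^ 2 := by
      rw [mul_assoc, hyy]
    rw [h2]
    have h3 : p * (p - 1) * (|x| + |y|) ^ (p - 2) * y ^ 2
        ≤ p * (p - 1) * (2 ^ (p - 2) * (|x| ^ (p - 2) + |y| ^ (p - 2))) * y ^ 2 := by
      apply mul_le_mul_of_nonneg_right _ (sq_nonneg y)
      exact mul_le_mul_of_nonneg_left hsplit hnn
    have h4 : |y| ^ (p - 2) * y ^ 2 = |y| ^ p := by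
      rcases eq_or_ne y 0 with rfl | hy0
      · simp [Real.zero_rpow (by linarith : p ≠ 0), Real.zero_rpow (ne_of_gt hq)]
      · have : y ^ 2 = |y| ^ (2:ℝ) := by
          rw [show ((2:ℝ)) = ((2:ℕ):ℝ) by norm_num, Real.rpow_natCast]
          rw [← sq_abs]
        rw [this, ← Real.rpow_add (abs_pos.mpr hy0)]
        norm_num
    calc p * (p - 1) * (|x| + |y|) ^ (p - 2) * y ^ 2
        ≤ p * (p - 1) * (2 ^ (p - 2) * (|x| ^ (p - 2) + |y| ^ (p - 2))) * y ^ 2 := h3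
      _ = (p * (p - 1) * 2 ^ (p - 2)) * (|x| ^ (p - 2) * y ^ 2 + |y| ^ (p - 2) * y ^ 2) := by
          ring
      _ = (p * (p - 1) * 2 ^ (p - 2)) * (|x| ^ (p - 2) * y ^ 2 + |y| ^ p) := by rw [h4]
  linarith

open ENNReal in
/-- Lyapunov's inequality: on a probability space, `E|f|^q ≤ (E|f|^r)^{q/r}` for `0 < q ≤ r`. -/
lemma integral_abs_rpow_le_rpow {Ω : Type} [MeasurableSpace Ω] {P : Measure Ω}
    [IsProbabilityMeasure P] {f : Ω → ℝ} {q r : ℝ} (hq : 0 < q) (hqr : q ≤ r)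
    (hf : MemLp f (ENNReal.ofReal r) P) :
    ∫ ω, |f ω| ^ q ∂P ≤ (∫ ω, |f ω| ^ r ∂P) ^ (q / r) := by
  have hr : 0 < r := lt_of_lt_of_le hq hqr
  have hfq : MemLp f (ENNReal.ofReal q) P :=
    hf.mono_exponent (ENNReal.ofReal_le_ofReal hqr)
  have hq0 : ENNReal.ofReal q ≠ 0 := by simp [ENNReal.ofReal_eq_zero]; linarith
  have hr0 : ENNReal.ofReal r ≠ 0 := by simp [ENNReal.ofReal_eq_zero]; linarith
  have e1 := hfq.eLpNorm_eq_integral_rpow_norm hq0 ENNReal.ofReal_ne_top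
  have e2 := hf.eLpNorm_eq_integral_rpow_norm hr0 ENNReal.ofReal_ne_top
  have hle := eLpNorm_le_eLpNorm_of_exponent_le
    (ENNReal.ofReal_le_ofReal hqr) hf.aestronglyMeasurable (μ := P)
  rw [e1, e2] at hle
  rw [ENNReal.toReal_ofReal hq.le] at hle
  rw [ENNReal.toReal_ofReal hr.le] at hle
  have hIq : 0 ≤ ∫ ω, ‖f ω‖ ^ q ∂P :=
    integral_nonneg fun ω => Real.rpow_nonneg (norm_nonneg _) q
  have hIr : 0 ≤ ∫ ω, ‖f ω‖ ^ r ∂P :=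
    integral_nonneg fun ω => Real.rpow_nonneg (norm_nonneg _) r
  have hle' : (∫ ω, ‖f ω‖ ^ q ∂P) ^ q⁻¹ ≤ (∫ ω, ‖f ω‖ ^ r ∂P) ^ r⁻¹ :=
    (ENNReal.ofReal_le_ofReal_iff (Real.rpow_nonneg hIr r⁻¹)).mp hle
  have := Real.rpow_le_rpow (Real.rpow_nonneg hIq q⁻¹) hle' hq.le
  rw [← Real.rpow_mul hIq, ← Real.rpow_mul hIr, inv_mul_cancel₀ (ne_of_gt hq),
    Real.rpow_one] at this
  have hqr' : r⁻¹ * q = q / r := by field_simp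
  rw [hqr'] at this
  simpa [Real.norm_eq_abs] using this

lemma sum_attachFin_val {M : Type*} [AddCommMonoid M] (s : Finset ℕ) {n : ℕ}
    (h : ∀ m ∈ s, m < n) (f : ℕ → M) :
    ∑ j ∈ s.attachFin h, f (j : ℕ) = ∑ i ∈ s, f i := by
  apply Finset.sum_bij (fun (a : Fin n) (_ : a ∈ s.attachFin h) => (a : ℕ))
  · intro a ha; exact (Finset.mem_attachFin h).mp ha
  · intro a ha b hb hab; exact Fin.val_injective hab
  · intro b hb; exact ⟨⟨b, h b hb⟩, (Finset.mem_attachFin h).mpr hb, rfl⟩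
  · intro a ha; rfl

section core

variable {Ω : Type} [MeasurableSpace Ω] {P : Measure Ω} [IsProbabilityMeasure P]

lemma rosenthal_step {p : ℝ} (hp : 2 < p) {k : ℕ} {X : ℕ → Ω → ℝ}
    (hind : iIndepFun (fun i : Fin k => X i) P)
    (hmeas : ∀ i, i < k → Measurable (X i))
    (hmean : ∀ i, i < k → ∫ ω, X i ω ∂P = 0)
    (hLp : ∀ i, i < k → MemLp (X i) (ENNReal.ofReal p) P)
    {n : ℕ} (hn : n < k) :
    (∫ ω, |∑ i ∈ Finset.range (n+1), X i ω| ^ p ∂P)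
      ≤ (∫ ω, |∑ i ∈ Finset.range n, X i ω| ^ p ∂P)
        + (p * (p - 1) * 2 ^ (p - 2)) *
          ((∫ ω, |∑ i ∈ Finset.range n, X i ω| ^ (p - 2) ∂P) * (∫ ω, (X n ω) ^ 2 ∂P)
            + ∫ ω, |X n ω| ^ p ∂P) := by
  have hp0 : (0:ℝ) < p := by linarith
  have hp1 : (1:ℝ) < p := by linarith
  have hq : (0:ℝ) < p - 2 := by linarith
  have hep : (ENNReal.ofReal p).toReal = p := ENNReal.toReal_ofReal hp0.le
  set S : Ω → ℝ := fun ω => ∑ i ∈ Finset.range n, X i ω with hS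
  -- measurability and integrability facts
  have hSmeas : Measurable S :=
    Finset.measurable_sum _ fun i hi => hmeas i (lt_of_lt_of_le (Finset.mem_range.mp hi) hn.le)
  have hSLp : MemLp S (ENNReal.ofReal p) P :=
    memLp_finset_sum _ fun i hi =>
      hLp i (lt_of_lt_of_le (Finset.mem_range.mp hi) hn.le)
  have hofReal_le : ∀ {a b : ℝ}, a ≤ b → ENNReal.ofReal a ≤ ENNReal.ofReal b :=
    fun h => ENNReal.ofReal_le_ofReal h
  have hint_rpow : ∀ (q : ℝ), 0 < q → q ≤ p → Integrable (fun ω => |S ω| ^ q) P := by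
    intro q hq0 hqp
    have h1 : MemLp S (ENNReal.ofReal q) P :=
      hSLp.mono_exponent (hofReal_le hqp)
    have := h1.integrable_norm_rpow (by simp [ENNReal.ofReal_eq_zero]; linarith)
      ENNReal.ofReal_ne_top
    simpa [Real.norm_eq_abs, ENNReal.toReal_ofReal hq0.le] using this
  have hAint : Integrable (fun ω => |S ω| ^ p) P := hint_rpow p hp0 le_rfl
  have hIint : Integrable (fun ω => |S ω| ^ (p - 2)) P := hint_rpow _ hq (by linarith)
  have hI1int : Integrable (fun ω => |S ω| ^ (p - 1)) P := hint_rpow _ (by linarith) (by linarith)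
  have hXint : Integrable (X n) P :=
    (hLp n hn).integrable (by simpa using ENNReal.one_le_ofReal.mpr hp1.le)
  have hX2int : Integrable (fun ω => (X n ω) ^ 2) P := by
    have h1 : MemLp (X n) 2 P := by
      have := (hLp n hn).mono_exponent
        (hofReal_le (by linarith : (2:ℝ) ≤ p))
      rwa [ENNReal.ofReal_ofNat] at this
    exact h1.integrable_sq
  have hXpint : Integrable (fun ω => |X n ω| ^ p) P := by
    have := (hLp n hn).integrable_norm_rpow (by simp [ENNReal.ofReal_eq_zero]; linarith)
      ENNReal.ofReal_ne_top
    simpa [Real.norm_eq_abs, hep] using this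
  -- independence of S and X n
  have hindSX : IndepFun S (X n) P := by
    have hall : ∀ m ∈ Finset.range n, m < k :=
      fun m hm => lt_of_lt_of_le (Finset.mem_range.mp hm) hn.le
    have h1 : IndepFun (∑ j ∈ (Finset.range n).attachFin hall, X (j : ℕ)) (X n) P := by
      have h2 := hind.indepFun_finsetSum_of_notMem
        (fun i : Fin k => hmeas i i.isLt)
        (s := (Finset.range n).attachFin hall) (i := ⟨n, hn⟩)
        (by simp [Finset.mem_attachFin])
      exact h2
    have h3 : (∑ j ∈ (Finset.range n).attachFin hall, X (j : ℕ)) = S := by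
      funext ω
      rw [Finset.sum_apply]
      exact sum_attachFin_val _ hall (fun i => X i ω)
    rwa [h3] at h1
  -- continuity/measurability of the auxiliary maps
  have hgcont : Continuous (fun t : ℝ => |t| ^ (p - 2)) :=
    continuous_abs.rpow_const (fun x => Or.inr hq.le)
  have hgmul : Measurable (fun t : ℝ => |t| ^ (p - 2) * t) :=
    (hgcont.mul continuous_id).measurable
  have habsm : Measurable (fun t : ℝ => |t| ^ (p - 2)) := hgcont.measurable
  have hsqm : Measurable (fun t : ℝ => t ^ 2) := (continuous_pow 2).measurable
  have hind1 : IndepFun (fun ω => |S ω| ^ (p - 2) * S ω) (X n) P :=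
    hindSX.comp hgmul measurable_id
  have hind2 : IndepFun (fun ω => |S ω| ^ (p - 2)) (fun ω => (X n ω) ^ 2) P :=
    hindSX.comp habsm hsqm
  -- integrability of |S|^{p-2} S
  have habs_g : ∀ x : ℝ, |(|x| ^ (p - 2) * x)| = |x| ^ (p - 1) := by
    intro x
    rw [abs_mul, abs_of_nonneg (Real.rpow_nonneg (abs_nonneg x) _)]
    rcases eq_or_ne x 0 with rfl | hx
    · simp [Real.zero_rpow (ne_of_gt hq), Real.zero_rpow (by linarith : p - 1 ≠ 0)]
    · rw [show p - 1 = (p - 2) + 1 by ring, Real.rpow_add_one (by simpa using hx)]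
  have hg_int : Integrable (fun ω => |S ω| ^ (p - 2) * S ω) P := by
    refine hI1int.mono ((hgmul.comp hSmeas).aestronglyMeasurable) ?_
    filter_upwards with ω
    rw [Real.norm_eq_abs, Real.norm_eq_abs, habs_g,
      abs_of_nonneg (Real.rpow_nonneg (abs_nonneg _) _)]
  have hprod1_int : Integrable (fun ω => (|S ω| ^ (p - 2) * S ω) * X n ω) P :=
    hind1.integrable_mul hg_int hXint
  have hprod2_int : Integrable (fun ω => |S ω| ^ (p - 2) * (X n ω) ^ 2) P :=
    hind2.integrable_mul hIint hX2int
  -- the linear term integrates to zero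
  have hzero : ∫ ω, (|S ω| ^ (p - 2) * S ω) * X n ω ∂P = 0 := by
    have h := hind1.integral_mul_eq_mul_integral hg_int.aestronglyMeasurable hXint.aestronglyMeasurable
    rw [hmean n hn, mul_zero] at h
    simpa [Pi.mul_apply] using h
  -- the quadratic term factorizes
  have hfact : ∫ ω, |S ω| ^ (p - 2) * (X n ω) ^ 2 ∂P
      = (∫ ω, |S ω| ^ (p - 2) ∂P) * ∫ ω, (X n ω) ^ 2 ∂P := by
    have h := hind2.integral_mul_eq_mul_integral hIint.aestronglyMeasurable hX2int.aestronglyMeasurable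
    simpa [Pi.mul_apply] using h
  -- pointwise bound and integration
  set Cp : ℝ := p * (p - 1) * 2 ^ (p - 2) with hCp
  have hlin_int : Integrable (fun ω => p * (|S ω| ^ (p - 2) * S ω) * X n ω) P := by
    have := hprod1_int.const_mul p
    simpa [mul_assoc] using this
  have hquad_int : Integrable
      (fun ω => Cp * (|S ω| ^ (p - 2) * (X n ω) ^ 2 + |X n ω| ^ p)) P :=
    (hprod2_int.add hXpint).const_mul Cp
  have hmono : (∫ ω, |S ω + X n ω| ^ p ∂P)
      ≤ ∫ ω, (|S ω| ^ p + (p * (|S ω| ^ (p - 2) * S ω)) * X n ω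
          + Cp * (|S ω| ^ (p - 2) * (X n ω) ^ 2 + |X n ω| ^ p)) ∂P := by
    have hlhs : Integrable (fun ω => |S ω + X n ω| ^ p) P := by
      have h1 : MemLp (fun ω => S ω + X n ω) (ENNReal.ofReal p) P := hSLp.add (hLp n hn)
      have := h1.integrable_norm_rpow (by simp [ENNReal.ofReal_eq_zero]; linarith)
        ENNReal.ofReal_ne_top
      simpa [Real.norm_eq_abs, hep] using this
    refine integral_mono hlhs ?_ (fun ω => pointwise_rosenthal hp (S ω) (X n ω))
    exact (hAint.add hlin_int).add hquad_int
  have hlhs_eq : (∫ ω, |∑ i ∈ Finset.range (n+1), X i ω| ^ p ∂P)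
      = ∫ ω, |S ω + X n ω| ^ p ∂P := by
    congr 1
    funext ω
    rw [Finset.sum_range_succ]
  rw [hlhs_eq]
  refine le_trans hmono (le_of_eq ?_)
  have hfg_int : Integrable
      (fun ω => |S ω| ^ p + p * (|S ω| ^ (p - 2) * S ω) * X n ω) P := hAint.add hlin_int
  rw [integral_add hfg_int hquad_int, integral_add hAint hlin_int]
  have hlin_eq : ∫ ω, p * (|S ω| ^ (p - 2) * S ω) * X n ω ∂P = 0 := by
    have h : (fun ω => p * (|S ω| ^ (p - 2) * S ω) * X n ω)
        = fun ω => p * ((|S ω| ^ (p - 2) * S ω) * X n ω) := by funext ω; ring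
    rw [h, integral_const_mul, hzero, mul_zero]
  rw [hlin_eq, integral_const_mul, integral_add hprod2_int hXpint, hfact]
  simp [hS]

end core

/-- **Rosenthal's inequality.** For `p > 2` there is `C > 0`, depending only on `p`, such that
for all `k ≥ 1` and all independent, mean zero, real random variables `X̂_0, …, X̂_{k-1}` with
`E[|X̂_i|^p] < ∞`:
`E[|∑ X̂_i|^p] ≤ C ((∑ E[X̂_i^2])^{p/2} + ∑ E[|X̂_i|^p])`. -/
theorem stmt6 (p : ℝ) (hp : 2 < p) :
    ∃ C : ℝ, 0 < C ∧
      ∀ (Ω : Type) (_ : MeasurableSpace Ω) (P : Measure Ω), IsProbabilityMeasure P →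
      ∀ (k : ℕ), 1 ≤ k →
      ∀ (X : ℕ → Ω → ℝ),
        iIndepFun (fun i : Fin k => X i) P →
        (∀ i, i < k → Measurable (X i)) →
        (∀ i, i < k → ∫ ω, X i ω ∂P = 0) →
        (∀ i, i < k → MemLp (X i) (ENNReal.ofReal p) P) →
        (∫ ω, |∑ i ∈ Finset.range k, X i ω| ^ p ∂P)
          ≤ C * ((∑ i ∈ Finset.range k, ∫ ω, (X i ω) ^ 2 ∂P) ^ (p / 2) +
              ∑ i ∈ Finset.range k, ∫ ω, |X i ω| ^ p ∂P) := by
  have hp0 : (0:ℝ) < p := by linarith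
  have hq : (0:ℝ) < p - 2 := by linarith
  set Cp : ℝ := p * (p - 1) * 2 ^ (p - 2) with hCpdef
  have hCp0 : 0 < Cp := by
    have h2 : (0:ℝ) < 2 ^ (p - 2) := Real.rpow_pos_of_pos (by norm_num) _
    have : (0:ℝ) < p * (p - 1) := by nlinarith
    positivity
  set C : ℝ := Cp ^ (p / 2) + (p / 2) * Cp + 1 with hCdef
  have hC0 : 0 < C := by
    have h1 : (0:ℝ) ≤ Cp ^ (p / 2) := Real.rpow_nonneg hCp0.le _
    have h2 : (0:ℝ) ≤ (p / 2) * Cp := by positivity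
    simp only [hCdef]; linarith
  refine ⟨C, hC0, ?_⟩
  intro Ω mΩ P hP k hk X hind hmeas hmean hLp
  haveI := hP
  set v : ℕ → ℝ := fun i => ∫ ω, (X i ω) ^ 2 ∂P with hv
  set m : ℕ → ℝ := fun i => ∫ ω, |X i ω| ^ p ∂P with hm
  set A : ℕ → ℝ := fun n => ∫ ω, |∑ i ∈ Finset.range n, X i ω| ^ p ∂P with hA
  set σ2 : ℝ := ∑ i ∈ Finset.range k, v i with hσ2
  set b : ℝ := ∑ i ∈ Finset.range k, m i with hb
  have hA_nonneg : ∀ n, 0 ≤ A n := fun n =>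
    integral_nonneg fun ω => Real.rpow_nonneg (abs_nonneg _) _
  have hv_nonneg : ∀ i, 0 ≤ v i := fun i => integral_nonneg fun ω => sq_nonneg _
  have hm_nonneg : ∀ i, 0 ≤ m i := fun i =>
    integral_nonneg fun ω => Real.rpow_nonneg (abs_nonneg _) _
  have hσ2_nonneg : 0 ≤ σ2 := Finset.sum_nonneg fun i _ => hv_nonneg i
  have hb_nonneg : 0 ≤ b := Finset.sum_nonneg fun i _ => hm_nonneg i
  have hA0 : A 0 = 0 := by
    simp [hA, Real.zero_rpow (ne_of_gt hp0)]
  -- the maximum of the moments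
  have hne : (Finset.range (k+1)).Nonempty := Finset.nonempty_range_iff.mpr (Nat.succ_ne_zero k)
  set M : ℝ := (Finset.range (k+1)).sup' hne A with hM
  have hA_le_M : ∀ n, n ≤ k → A n ≤ M := fun n hn =>
    Finset.le_sup' A (Finset.mem_range.mpr (Nat.lt_succ_of_le hn))
  have hM_nonneg : 0 ≤ M := le_trans (hA_nonneg 0) (hA_le_M 0 (Nat.zero_le k))
  set θ : ℝ := (p - 2) / p with hθ
  have hθ_nonneg : 0 ≤ θ := by positivity
  -- the one-step recursion with the maximum plugged in
  have hstep : ∀ n, n < k → A (n+1) ≤ A n + Cp * (M ^ θ * v n + m n) := by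
    intro n hn
    have h1 := rosenthal_step hp hind hmeas hmean hLp hn
    have hSLp : MemLp (fun ω => ∑ i ∈ Finset.range n, X i ω) (ENNReal.ofReal p) P :=
      memLp_finset_sum _ fun i hi =>
        hLp i (lt_of_lt_of_le (Finset.mem_range.mp hi) hn.le)
    have h2 : (∫ ω, |∑ i ∈ Finset.range n, X i ω| ^ (p - 2) ∂P) ≤ M ^ θ := by
      have h3 := integral_abs_rpow_le_rpow hq (by linarith : p - 2 ≤ p) hSLp
      refine le_trans h3 ?_
      exact Real.rpow_le_rpow (hA_nonneg n) (hA_le_M n hn.le) hθ_nonneg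
    refine le_trans h1 ?_
    have h4 : (∫ ω, |∑ i ∈ Finset.range n, X i ω| ^ (p - 2) ∂P) * v n ≤ M ^ θ * v n :=
      mul_le_mul_of_nonneg_right h2 (hv_nonneg n)
    have h5 : Cp * ((∫ ω, |∑ i ∈ Finset.range n, X i ω| ^ (p - 2) ∂P) * v n + m n)
        ≤ Cp * (M ^ θ * v n + m n) :=
      mul_le_mul_of_nonneg_left (by linarith) hCp0.le
    have := add_le_add_left h5 (A n)
    simpa [hA, hv, hm] using this
  -- the telescoped bound
  have hmain : ∀ n, n ≤ k →
      A n ≤ Cp * (M ^ θ * (∑ i ∈ Finset.range n, v i) + ∑ i ∈ Finset.range n, m i) := by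
    intro n
    induction n with
    | zero => intro _; simp [hA0]
    | succ n ih =>
      intro hn
      have hn' : n < k := Nat.lt_of_succ_le hn
      have h1 := hstep n hn'
      have h2 := ih hn'.le
      rw [Finset.sum_range_succ, Finset.sum_range_succ]
      calc A (n+1) ≤ A n + Cp * (M ^ θ * v n + m n) := h1
        _ ≤ Cp * (M ^ θ * (∑ i ∈ Finset.range n, v i) + ∑ i ∈ Finset.range n, m i)
            + Cp * (M ^ θ * v n + m n) := by linarith
        _ = Cp * (M ^ θ * ((∑ i ∈ Finset.range n, v i) + v n)
            + ((∑ i ∈ Finset.range n, m i) + m n)) := by ring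
  -- bound on the maximum itself
  have hMle : M ≤ Cp * (M ^ θ * σ2 + b) := by
    obtain ⟨n0, hn0mem, hn0⟩ := Finset.exists_mem_eq_sup' hne A
    have hn0k : n0 ≤ k := Nat.lt_succ_iff.mp (Finset.mem_range.mp hn0mem)
    have h1 := hmain n0 hn0k
    have hsub : Finset.range n0 ⊆ Finset.range k := Finset.range_subset_range.mpr hn0k
    have h2 : (∑ i ∈ Finset.range n0, v i) ≤ σ2 :=
      Finset.sum_le_sum_of_subset_of_nonneg hsub fun i _ _ => hv_nonneg i
    have h3 : (∑ i ∈ Finset.range n0, m i) ≤ b :=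
      Finset.sum_le_sum_of_subset_of_nonneg hsub fun i _ _ => hm_nonneg i
    have h4 : M ^ θ * (∑ i ∈ Finset.range n0, v i) ≤ M ^ θ * σ2 :=
      mul_le_mul_of_nonneg_left h2 (Real.rpow_nonneg hM_nonneg θ)
    have hMA : M = A n0 := hn0
    calc M = A n0 := hMA
      _ ≤ Cp * (M ^ θ * (∑ i ∈ Finset.range n0, v i) + ∑ i ∈ Finset.range n0, m i) := h1
      _ ≤ Cp * (M ^ θ * σ2 + b) := mul_le_mul_of_nonneg_left (by linarith) hCp0.le
  -- Young's inequality step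
  have hyoung : Cp * (M ^ θ * σ2) ≤ θ * M + (2 / p) * (Cp * σ2) ^ (p / 2) := by
    have hw : θ + 2 / p = 1 := by rw [hθ, ← add_div, sub_add_cancel, div_self hp0.ne']
    have h1 := Real.geom_mean_le_arith_mean2_weighted hθ_nonneg
      (by positivity : (0:ℝ) ≤ 2 / p) hM_nonneg
      (Real.rpow_nonneg (mul_nonneg hCp0.le hσ2_nonneg) (p / 2)) hw
    have h2 : ((Cp * σ2) ^ (p / 2)) ^ (2 / p) = Cp * σ2 := by
      rw [← Real.rpow_mul (mul_nonneg hCp0.le hσ2_nonneg)]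
      rw [show p / 2 * (2 / p) = 1 by field_simp]
      exact Real.rpow_one _
    rw [h2] at h1
    calc Cp * (M ^ θ * σ2) = M ^ θ * (Cp * σ2) := by ring
      _ ≤ θ * M + (2 / p) * (Cp * σ2) ^ (p / 2) := h1
  have hMfinal : M ≤ (Cp * σ2) ^ (p / 2) + (p / 2) * Cp * b := by
    have h1 : M ≤ θ * M + (2 / p) * (Cp * σ2) ^ (p / 2) + Cp * b := by
      have := hMle
      have h2 : Cp * (M ^ θ * σ2 + b) = Cp * (M ^ θ * σ2) + Cp * b := by ring
      rw [h2] at this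
      linarith
    have hθlt : 1 - θ = 2 / p := by rw [hθ, one_sub_div hp0.ne']; ring
    have h3 : (2 / p) * M ≤ (2 / p) * (Cp * σ2) ^ (p / 2) + Cp * b := by
      have : (1 - θ) * M ≤ (2 / p) * (Cp * σ2) ^ (p / 2) + Cp * b := by linarith
      rwa [hθlt] at this
    have hp2 : (0:ℝ) < 2 / p := by positivity
    have h4 := mul_le_mul_of_nonneg_left h3 (le_of_lt (by positivity : (0:ℝ) < p / 2))
    have h5 : p / 2 * (2 / p * M) = M := by field_simp
    have h6 : p / 2 * ((2 / p) * (Cp * σ2) ^ (p / 2) + Cp * b)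
        = (Cp * σ2) ^ (p / 2) + (p / 2) * Cp * b := by field_simp
    rw [h5, h6] at h4
    exact h4
  -- conclude
  have hAk : A k ≤ C * (σ2 ^ (p / 2) + b) := by
    have h1 : (Cp * σ2) ^ (p / 2) = Cp ^ (p / 2) * σ2 ^ (p / 2) :=
      Real.mul_rpow hCp0.le hσ2_nonneg
    have h2 : A k ≤ M := hA_le_M k le_rfl
    have h3 : Cp ^ (p / 2) * σ2 ^ (p / 2) ≤ C * σ2 ^ (p / 2) := by
      apply mul_le_mul_of_nonneg_right _ (Real.rpow_nonneg hσ2_nonneg _)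
      have : (0:ℝ) ≤ (p / 2) * Cp := by positivity
      simp only [hCdef]; linarith
    have h4 : (p / 2) * Cp * b ≤ C * b := by
      apply mul_le_mul_of_nonneg_right _ hb_nonneg
      have : (0:ℝ) ≤ Cp ^ (p / 2) := Real.rpow_nonneg hCp0.le _
      simp only [hCdef]; linarith
    calc A k ≤ (Cp * σ2) ^ (p / 2) + (p / 2) * Cp * b := le_trans h2 hMfinal
      _ = Cp ^ (p / 2) * σ2 ^ (p / 2) + (p / 2) * Cp * b := by rw [h1]
      _ ≤ C * σ2 ^ (p / 2) + C * b := add_le_add h3 h4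
      _ = C * (σ2 ^ (p / 2) + b) := by ring
  simpa [hA, hσ2, hb, hv, hm] using hAk
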